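/- For every integer n ≥ 1, B(n) = Σ_{k=1}^{⌊(n+1)/2⌋} (2k-1)!·S(n+1,2k). -/

import Mathlib

open Finset

/-- Stirling numbers of the second kind. -/
def S : ℕ → ℕ → ℕ
  | 0, 0 => 1
  | 0, _ + 1 => 0
  | _ + 1, 0 => 0
  | n + 1, k + 1 => (k + 1) * S n (k + 1) + S n k

/-- Ordered Bell (Fubini) numbers. -/
def B (n : ℕ) : ℕ := ∑ k ∈ range (n + 1), k.factorial * S n k

lemma S_zero_right (n : ℕ) (hn : 1 ≤ n) : S n 0 = 0 := by
  cases n with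
  | zero => omega
  | succ k => rfl

lemma S_eq_zero : ∀ n k : ℕ, n < k → S n k = 0 := by
  intro n
  induction n with
  | zero =>
    intro k hk
    cases k with
    | zero => omega
    | succ k => rfl
  | succ n ih =>
    intro k hk
    cases k with
    | zero => omega
    | succ k =>
      show (k + 1) * S n (k + 1) + S n k = 0
      rw [ih (k+1) (by omega), ih k (by omega)]
      ring

lemma pair_sum (f : ℕ → ℕ) (m : ℕ) :
    ∑ j ∈ Icc 1 (2*m), f j = ∑ k ∈ Icc 1 m, (f (2*k-1) + f (2*k)) := by
  induction m with
  | zero => simp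
  | succ m ih =>
    have e1 : 2*(m+1) = (2*m+1)+1 := by ring
    rw [e1, Finset.sum_Icc_succ_top (by omega : 1 ≤ 2*m+1+1),
      Finset.sum_Icc_succ_top (by omega : 1 ≤ 2*m+1), ih,
      Finset.sum_Icc_succ_top (by omega : 1 ≤ m+1)]
    have h1 : 2*(m+1)-1 = 2*m+1 := by omega
    have h2 : 2*(m+1) = 2*m+1+1 := by omega
    have h3 : 2*m+1+1-1 = 2*m+1 := by omega
    simp only [h1, h2, h3]
    rw [add_assoc]

theorem stmt5 (n : ℕ) (hn : 1 ≤ n) :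
    B n = ∑ k ∈ Icc 1 ((n + 1) / 2), (2 * k - 1).factorial * S (n + 1) (2 * k) := by
  set m := (n+1)/2 with hm
  set f : ℕ → ℕ := fun j => j.factorial * S n j with hf
  have hterm : ∀ k ∈ Icc 1 m, (2*k-1).factorial * S (n+1) (2*k) = f (2*k-1) + f (2*k) := by
    intro k hk
    have hk1 : 1 ≤ k := (Finset.mem_Icc.mp hk).1
    obtain ⟨j, hj⟩ : ∃ j, 2*k = j+1 := ⟨2*k-1, by omega⟩
    have hj' : 2*k-1 = j := by omega
    rw [hj', hj]
    show j.factorial * ((j+1) * S n (j+1) + S n j) = f j + f (j+1)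
    simp only [hf, Nat.factorial_succ]
    ring
  rw [Finset.sum_congr rfl hterm, ← pair_sum]
  have hle : n ≤ 2*m := by omega
  have hsub : Icc 1 n ⊆ Icc 1 (2*m) := Finset.Icc_subset_Icc_right hle
  rw [← Finset.sum_subset hsub (by
    intro x hx hnx
    simp only [Finset.mem_Icc] at hx hnx
    simp only [hf]
    exact mul_eq_zero_of_right _ (S_eq_zero n x (by omega)))]
  rw [B, Finset.range_eq_Ico, Finset.sum_eq_sum_Ico_succ_bot (by omega : 0 < n+1),
    Finset.Ico_add_one_right_eq_Icc]
  simp [hf, S_zero_right n hn]
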